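/- Let α > 0 and let V : (0,∞) → [0,∞). Then the kernel √(V(r))·T_0⁻¹(r,r')·√(V(r')) is positive definite on (0,∞)×(0,∞), where for r ≤ r', T_0⁻¹(r,r') = √(rr')·(1/(2α) - log r') if r ≤ r' ≤ 1, = √(rr')·(1/(2α))·(r/r')^α if 1 < r ≤ r', and = √(rr')·(1/(2α))·(r')^{-α} if r ≤ 1 ≤ r' (extended symmetrically). -/

import Mathlib

open MeasureTheory Set

/-- The limiting Green's function `T_0⁻¹(r,r')` in the angular momentum channel `m = 0`,
written symmetrically via `u = min r r'`, `v = max r r'`. -/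
noncomputable def T0inv (α r r' : ℝ) : ℝ :=
  let u := min r r'
  let v := max r r'
  if v ≤ 1 then Real.sqrt (u * v) * (1 / (2 * α) - Real.log v)
  else if 1 < u then Real.sqrt (u * v) * (1 / (2 * α)) * (u / v) ^ α
  else Real.sqrt (u * v) * (1 / (2 * α)) * v ^ (-α)

/-! ### Auxiliary functions for the decomposition of the kernel -/

noncomputable def Afn (α r : ℝ) : ℝ := if r ≤ 1 then 1 else r ^ (-α)
noncomputable def pfn (r : ℝ) : ℝ := if r ≤ 1 then -Real.log r else 0
noncomputable def hfn (α r : ℝ) : ℝ := if r ≤ 1 then 0 else r ^ (-α)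
noncomputable def qfn (α r : ℝ) : ℝ := if r ≤ 1 then 0 else (r ^ (2*α) - 1) / (2*α)

lemma pfn_nonneg {r : ℝ} (hr : 0 < r) : 0 ≤ pfn r := by
  unfold pfn; split
  · next h => simpa using Real.log_nonpos hr.le h
  · exact le_refl 0

lemma qfn_nonneg {r : ℝ} (α : ℝ) (hα : 0 < α) : 0 ≤ qfn α r := by
  unfold qfn; split
  · exact le_refl 0
  · next h =>
    push_neg at h
    have : (1:ℝ) ≤ r ^ (2*α) := Real.one_le_rpow h.le (by positivity)
    have h2 : (0:ℝ) < 2*α := by positivity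
    exact div_nonneg (by linarith) h2.le

/-! ### The decomposition of `T0inv` into a sum of positive-definite pieces -/

lemma T0inv_decomp_le (α : ℝ) (hα : 0 < α) {r r' : ℝ} (hr : 0 < r) (hr' : 0 < r') (hle : r ≤ r') :
    T0inv α r r' = Real.sqrt r * Real.sqrt r' *
      ((1 / (2*α)) * (Afn α r * Afn α r') + min (pfn r) (pfn r')
        + (hfn α r * hfn α r') * min (qfn α r) (qfn α r')) := by
  have hmin : min r r' = r := min_eq_left hle
  have hmax : max r r' = r' := max_eq_right hle
  have hsq : Real.sqrt (r * r') = Real.sqrt r * Real.sqrt r' := Real.sqrt_mul hr.le _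
  unfold T0inv Afn pfn hfn qfn
  simp only [hmin, hmax]
  by_cases hv : r' ≤ 1
  · have hu : r ≤ 1 := hle.trans hv
    have hlog : min (-Real.log r) (-Real.log r') = -Real.log r' := by
      have := Real.log_le_log hr hle
      exact min_eq_right (by linarith)
    simp only [if_pos hv, if_pos hu, hlog]
    rw [hsq]; ring
  · push_neg at hv
    rw [if_neg (not_le.2 hv)]
    by_cases hu : 1 < r
    · have hu' : ¬ r ≤ 1 := not_le.2 hu
      rw [if_pos hu]
      simp only [if_neg hu', if_neg (not_le.2 hv)]
      have hminq : min ((r ^ (2*α) - 1) / (2*α)) ((r' ^ (2*α) - 1) / (2*α))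
          = (r ^ (2*α) - 1) / (2*α) := by
        apply min_eq_left
        have : r ^ (2*α) ≤ r' ^ (2*α) := Real.rpow_le_rpow hr.le hle (by positivity)
        have h2 : (0:ℝ) < 2*α := by positivity
        gcongr
      rw [hminq, hsq]
      have e1 : r ^ (-α) = (r ^ α)⁻¹ := Real.rpow_neg hr.le α
      have e2 : r' ^ (-α) = (r' ^ α)⁻¹ := Real.rpow_neg hr'.le α
      have e3 : r ^ (2*α) = r ^ α * r ^ α := by
        rw [two_mul, Real.rpow_add hr]
      have e4 : (r / r') ^ α = r ^ α / r' ^ α := Real.div_rpow hr.le hr'.le α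
      have ha : (0:ℝ) < r ^ α := Real.rpow_pos_of_pos hr α
      have hb : (0:ℝ) < r' ^ α := Real.rpow_pos_of_pos hr' α
      rw [e1, e2, e3, e4]
      have hmn : min (0:ℝ) 0 = 0 := min_self 0
      rw [hmn]
      field_simp
      ring
    · rw [if_neg hu]
      push_neg at hu
      simp only [if_pos hu, if_neg (not_le.2 hv)]
      have hminp : min (-Real.log r) (0:ℝ) = 0 := by
        apply min_eq_right
        simpa using Real.log_nonpos hr.le hu
      rw [hminp, hsq]
      ring

lemma T0inv_symm (α r r' : ℝ) : T0inv α r r' = T0inv α r' r := by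
  unfold T0inv
  rw [min_comm, max_comm]

lemma T0inv_decomp (α : ℝ) (hα : 0 < α) {r r' : ℝ} (hr : 0 < r) (hr' : 0 < r') :
    T0inv α r r' = Real.sqrt r * Real.sqrt r' *
      ((1 / (2*α)) * (Afn α r * Afn α r') + min (pfn r) (pfn r')
        + (hfn α r * hfn α r') * min (qfn α r) (qfn α r')) := by
  rcases le_total r r' with hle | hle
  · exact T0inv_decomp_le α hα hr hr' hle
  · rw [T0inv_symm, T0inv_decomp_le α hα hr' hr hle, min_comm (pfn r'), min_comm (qfn α r')]
    ring

/-! ### Positive definiteness of the `min` kernel -/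

lemma indicator_Ico_mul (a b t : ℝ) :
    (Ico (0:ℝ) a).indicator (1 : ℝ → ℝ) t * (Ico (0:ℝ) b).indicator 1 t
      = (Ico (0:ℝ) (min a b)).indicator 1 t := by
  simp only [Set.indicator_apply, Set.mem_Ico, Pi.one_apply, lt_min_iff]
  by_cases h0 : 0 ≤ t <;> by_cases h1 : t < a <;> by_cases h2 : t < b <;> simp [h0, h1, h2]

lemma integrable_indicator_Ico (a : ℝ) :
    Integrable ((Ico (0:ℝ) a).indicator (1 : ℝ → ℝ)) := by
  rw [integrable_indicator_iff measurableSet_Ico]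
  exact integrableOn_const (by simp [Real.volume_Ico])

lemma integral_indicator_Ico (a : ℝ) (ha : 0 ≤ a) :
    ∫ t, (Ico (0:ℝ) a).indicator (1 : ℝ → ℝ) t = a := by
  rw [MeasureTheory.integral_indicator measurableSet_Ico]
  simp [Real.volume_Ico, ha, MeasureTheory.Measure.restrict_apply]

lemma min_kernel_nonneg {N : ℕ} (c y : Fin N → ℝ) (hc : ∀ j, 0 ≤ c j) :
    0 ≤ ∑ j, ∑ k, y j * y k * min (c j) (c k) := by
  have key : ∀ j k : Fin N, y j * y k * min (c j) (c k)
      = ∫ t, (y j * (Ico (0:ℝ) (c j)).indicator 1 t) * (y k * (Ico (0:ℝ) (c k)).indicator 1 t) := by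
    intro j k
    have : (fun t => (y j * (Ico (0:ℝ) (c j)).indicator 1 t) * (y k * (Ico (0:ℝ) (c k)).indicator 1 t))
        = fun t => (y j * y k) * (Ico (0:ℝ) (min (c j) (c k))).indicator 1 t := by
      funext t; rw [← indicator_Ico_mul]; ring
    rw [this, MeasureTheory.integral_const_mul, integral_indicator_Ico _ (le_min (hc j) (hc k))]
  calc (0:ℝ) ≤ ∫ t, (∑ j, y j * (Ico (0:ℝ) (c j)).indicator 1 t)^2 :=
        integral_nonneg fun t => sq_nonneg _
    _ = ∑ j, ∑ k, y j * y k * min (c j) (c k) := by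
        have : ∀ t : ℝ, (∑ j, y j * (Ico (0:ℝ) (c j)).indicator 1 t)^2
            = ∑ j, ∑ k, (y j * (Ico (0:ℝ) (c j)).indicator 1 t) * (y k * (Ico (0:ℝ) (c k)).indicator 1 t) := by
          intro t; rw [sq, Finset.sum_mul_sum]
        simp_rw [this]
        rw [MeasureTheory.integral_finset_sum]
        · refine Finset.sum_congr rfl fun j _ => ?_
          rw [MeasureTheory.integral_finset_sum]
          · exact Finset.sum_congr rfl fun k _ => (key j k).symm
          · intro k _
            have : (fun t => (y j * (Ico (0:ℝ) (c j)).indicator 1 t) * (y k * (Ico (0:ℝ) (c k)).indicator 1 t))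
                = fun t => (y j * y k) * (Ico (0:ℝ) (min (c j) (c k))).indicator 1 t := by
              funext t; rw [← indicator_Ico_mul]; ring
            rw [this]
            exact (integrable_indicator_Ico _).const_mul _
        · intro j _
          apply integrable_finset_sum
          intro k _
          have : (fun t => (y j * (Ico (0:ℝ) (c j)).indicator 1 t) * (y k * (Ico (0:ℝ) (c k)).indicator 1 t))
              = fun t => (y j * y k) * (Ico (0:ℝ) (min (c j) (c k))).indicator 1 t := by
            funext t; rw [← indicator_Ico_mul]; ring
          rw [this]
          exact (integrable_indicator_Ico _).const_mul _

lemma rank_one_nonneg {N : ℕ} (a y : Fin N → ℝ) :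
    0 ≤ ∑ j, ∑ k, y j * y k * (a j * a k) := by
  have : ∑ j, ∑ k, y j * y k * (a j * a k) = (∑ j, y j * a j)^2 := by
    rw [sq, Finset.sum_mul_sum]
    exact Finset.sum_congr rfl fun j _ => Finset.sum_congr rfl fun k _ => by ring
  rw [this]; exact sq_nonneg _

/-- The kernel `√(V(r)) T_0⁻¹(r,r') √(V(r'))` is positive definite on `(0,∞)²`. -/
theorem stmt_17 (α : ℝ) (hα : 0 < α) (V : ℝ → ℝ) (hV : ∀ r, 0 ≤ V r)
    (N : ℕ) (r : Fin N → ℝ) (hr : ∀ j, 0 < r j) (x : Fin N → ℝ) :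
    0 ≤ ∑ j, ∑ k, x j * x k *
      (Real.sqrt (V (r j)) * T0inv α (r j) (r k) * Real.sqrt (V (r k))) := by
  set y : Fin N → ℝ := fun j => x j * Real.sqrt (V (r j)) * Real.sqrt (r j) with hy
  have hsum : ∀ j k : Fin N, x j * x k *
      (Real.sqrt (V (r j)) * T0inv α (r j) (r k) * Real.sqrt (V (r k)))
      = y j * y k * ((Real.sqrt (1/(2*α)) * Afn α (r j)) * (Real.sqrt (1/(2*α)) * Afn α (r k)))
        + y j * y k * min (pfn (r j)) (pfn (r k))
        + (y j * hfn α (r j)) * (y k * hfn α (r k)) * min (qfn α (r j)) (qfn α (r k)) := by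
    intro j k
    rw [T0inv_decomp α hα (hr j) (hr k)]
    simp only [hy]
    set s : ℝ := Real.sqrt (1/(2*α)) with hsdef
    have hs : s * s = 1/(2*α) := Real.mul_self_sqrt (by positivity)
    rw [← hs]
    ring
  simp_rw [hsum, Finset.sum_add_distrib]
  have t1 := rank_one_nonneg (fun j => Real.sqrt (1/(2*α)) * Afn α (r j)) y
  have t2 := min_kernel_nonneg (fun j => pfn (r j)) y (fun j => pfn_nonneg (hr j))
  have t3 := min_kernel_nonneg (fun j => qfn α (r j)) (fun j => y j * hfn α (r j))
      (fun j => qfn_nonneg α hα)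
  exact add_nonneg (add_nonneg t1 t2) t3
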